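/- Let A and Â be symmetric n×n matrices, with A having exactly K nonzero eigenvalues all of absolute value at least λ_K > 0, and suppose U ∈ R^{n×K} and Û ∈ R^{n×K} are matrices of K leading orthonormal eigenvectors of A and Â respectively. Then there exists a K×K orthogonal matrix O such that ‖Û - U O‖_F ≤ (2√(2K) / λ_K) ‖Â - A‖₂. -/

import Mathlib

set_option maxHeartbeats 1600000

open Matrix Finset Module

section helpers
variable {n : ℕ}


lemma dot_self_nonneg (x : Fin n → ℝ) : 0 ≤ x ⬝ᵥ x :=
  Finset.sum_nonneg fun i _ => mul_self_nonneg _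

lemma dot_self_eq_zero' {x : Fin n → ℝ} (h : x ⬝ᵥ x = 0) : x = 0 := by
  funext i
  have h2 : ∀ j ∈ Finset.univ, 0 ≤ x j * x j := fun j _ => mul_self_nonneg _
  have := (Finset.sum_eq_zero_iff_of_nonneg h2).mp h i (mem_univ i)
  have : x i = 0 := by nlinarith
  simpa using this

lemma dot_self_pos {x : Fin n → ℝ} (h : x ≠ 0) : 0 < x ⬝ᵥ x := by
  rcases lt_or_eq_of_le (dot_self_nonneg x) with h1 | h1
  · exact h1
  · exact absurd (dot_self_eq_zero' h1.symm) h

end helpers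

lemma symm_op_bound {V : Type*} [NormedAddCommGroup V] [InnerProductSpace ℝ V]
    [FiniteDimensional ℝ V] {T : V →ₗ[ℝ] V} (hT : T.IsSymmetric) {m : ℝ} (hm : 0 ≤ m)
    (h : ∀ (c : ℝ) (a : V), a ≠ 0 → T a = c • a → |c| ≤ m) (y : V) : ‖T y‖ ≤ m * ‖y‖ := by
  classical
  set N := Module.finrank ℝ V with hN
  set b := hT.eigenvectorBasis (hN.symm) with hb
  have heig : ∀ i, T (b i) = hT.eigenvalues hN.symm i • b i :=
    fun i => hT.apply_eigenvectorBasis hN.symm i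
  have habs : ∀ i, |hT.eigenvalues hN.symm i| ≤ m := fun i =>
    h _ _ (b.orthonormal.ne_zero i) (heig i)
  have hrepr : ∀ i, b.repr (T y) i = hT.eigenvalues hN.symm i * b.repr y i := by
    intro i
    rw [b.repr_apply_apply, b.repr_apply_apply, ← hT (b i) y, heig i]
    simp [real_inner_smul_left]
  have h1 : ‖T y‖ ^ 2 ≤ m ^ 2 * ‖y‖ ^ 2 := by
    rw [← b.repr.norm_map (T y), ← b.repr.norm_map y]
    rw [EuclideanSpace.norm_eq, EuclideanSpace.norm_eq]
    rw [Real.sq_sqrt (by positivity), Real.sq_sqrt (by positivity)]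
    rw [Finset.mul_sum]
    apply Finset.sum_le_sum
    intro i _
    rw [hrepr i]
    have := habs i
    have : (hT.eigenvalues hN.symm i)^2 ≤ m^2 := sq_le_sq' (by linarith [abs_le.1 this]) (abs_le.1 this).2
    rw [Real.norm_eq_abs, Real.norm_eq_abs]
    rw [abs_mul]
    calc (|hT.eigenvalues hN.symm i| * |b.repr y i|)^2
        = (hT.eigenvalues hN.symm i)^2 * |b.repr y i|^2 := by ring_nf; rw [sq_abs, sq_abs]; ring
      _ ≤ m^2 * |b.repr y i|^2 := by nlinarith [sq_nonneg (b.repr y i), sq_abs (b.repr y i)]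
  calc ‖T y‖ = Real.sqrt (‖T y‖^2) := (Real.sqrt_sq (norm_nonneg _)).symm
    _ ≤ Real.sqrt (m^2 * ‖y‖^2) := Real.sqrt_le_sqrt h1
    _ = m * ‖y‖ := by rw [Real.sqrt_mul (sq_nonneg m), Real.sqrt_sq hm, Real.sqrt_sq (norm_nonneg _)]

lemma on_inner {V : Type*} [NormedAddCommGroup V] [InnerProductSpace ℝ V] {ι : Type*} [Fintype ι]
    {e : ι → V} (he : Orthonormal ℝ e) (c d : ι → ℝ) :
    (inner ℝ (∑ i, c i • e i) (∑ i, d i • e i) : ℝ) = ∑ i, c i * d i := by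
  rw [sum_inner]
  congr 1; ext i
  rw [real_inner_smul_left, he.inner_right_fintype]

lemma polar {K : ℕ} (W : Matrix (Fin K) (Fin K) ℝ)
    (hcontr : ∀ x : Fin K → ℝ, (W *ᵥ x) ⬝ᵥ (W *ᵥ x) ≤ x ⬝ᵥ x)
    (hinj : ∀ x, W *ᵥ x = 0 → x = 0) :
    ∃ O : Matrix (Fin K) (Fin K) ℝ, Oᵀ * O = 1 ∧ (Wᵀ * W).trace ≤ (Oᵀ * W).trace := by
  classical
  set G := Wᵀ * W with hGdef
  have hpsd : G.PosSemidef := by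
    have := Matrix.posSemidef_conjTranspose_mul_self W
    simpa [hGdef, Matrix.conjTranspose_eq_transpose_of_trivial] using this
  have hG : G.IsHermitian := hpsd.1
  set g := hG.eigenvalues with hg
  set Q : Matrix (Fin K) (Fin K) ℝ := (hG.eigenvectorUnitary : Matrix (Fin K) (Fin K) ℝ) with hQ
  have hQorth : Qᵀ * Q = 1 := by
    have := (Matrix.mem_unitaryGroup_iff').mp hG.eigenvectorUnitary.2
    simpa [hQ, Matrix.star_eq_conjTranspose, Matrix.conjTranspose_eq_transpose_of_trivial] using this
  have hQorth' : Q * Qᵀ = 1 := by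
    have := (Matrix.mem_unitaryGroup_iff).mp hG.eigenvectorUnitary.2
    simpa [hQ, Matrix.star_eq_conjTranspose, Matrix.conjTranspose_eq_transpose_of_trivial] using this
  have hspec : G = Q * Matrix.diagonal g * Qᵀ := by
    have := hG.spectral_theorem
    simpa [hQ, Matrix.star_eq_conjTranspose, Matrix.conjTranspose_eq_transpose_of_trivial, Function.comp] using this
  have hgnn : ∀ i, 0 ≤ g i := fun i => hpsd.eigenvalues_nonneg i
  -- eigenvalues are ≤ 1 and > 0
  have hunit : ∀ i, (fun j => (hG.eigenvectorBasis i) j) ⬝ᵥ (fun j => (hG.eigenvectorBasis i) j) = 1 := by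
    intro i
    have h1 : ‖hG.eigenvectorBasis i‖ = 1 := hG.eigenvectorBasis.orthonormal.1 i
    have h2 : (inner ℝ (hG.eigenvectorBasis i) (hG.eigenvectorBasis i) : ℝ) = 1 := by
      rw [real_inner_self_eq_norm_sq, h1]; norm_num
    rw [← h2, PiLp.inner_apply]
    simp [dotProduct, RCLike.inner_apply, mul_comm, sq]
  have heigvec : ∀ i, G *ᵥ (fun j => (hG.eigenvectorBasis i) j) = g i • (fun j => (hG.eigenvectorBasis i) j) :=
    fun i => hG.mulVec_eigenvectorBasis i
  have hgle : ∀ i, g i ≤ 1 := by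
    intro i
    set v : Fin K → ℝ := fun j => (hG.eigenvectorBasis i) j with hv
    have h3 : (G *ᵥ v) ⬝ᵥ v = g i := by
      rw [heigvec i]; rw [smul_dotProduct]; rw [hunit i]; simp
    have h4 : (G *ᵥ v) ⬝ᵥ v = (W *ᵥ v) ⬝ᵥ (W *ᵥ v) := by
      rw [hGdef, ← Matrix.mulVec_mulVec, dotProduct_comm, Matrix.dotProduct_mulVec]
      rw [Matrix.vecMul_transpose, dotProduct_comm]
    have := hcontr v
    rw [← h4, h3] at this
    rw [hunit i] at this
    exact this
  have hgpos : ∀ i, 0 < g i := by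
    intro i
    rcases lt_or_eq_of_le (hgnn i) with h | h
    · exact h
    · exfalso
      set v : Fin K → ℝ := fun j => (hG.eigenvectorBasis i) j with hv
      have h4 : (W *ᵥ v) ⬝ᵥ (W *ᵥ v) = 0 := by
        have h3 : (G *ᵥ v) ⬝ᵥ v = g i := by
          rw [heigvec i]; rw [smul_dotProduct]; rw [hunit i]; simp
        have h4 : (G *ᵥ v) ⬝ᵥ v = (W *ᵥ v) ⬝ᵥ (W *ᵥ v) := by
          rw [hGdef, ← Matrix.mulVec_mulVec, dotProduct_comm, Matrix.dotProduct_mulVec]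
          rw [Matrix.vecMul_transpose, dotProduct_comm]
        rw [← h4, h3, ← h]
      have h5 : W *ᵥ v = 0 := by
        have : ∀ j, (W *ᵥ v) j * (W *ᵥ v) j = 0 := by
          intro j
          have hnn : ∀ j, 0 ≤ (W *ᵥ v) j * (W *ᵥ v) j := fun j => mul_self_nonneg _
          have := Finset.sum_eq_zero_iff_of_nonneg (fun j _ => hnn j) |>.mp h4 j (mem_univ j)
          exact this
        funext j
        have h6 := this j
        have : (W *ᵥ v) j = 0 := by nlinarith [h6]
        simpa using this
      have hv0 : v = 0 := hinj v h5
      have := hunit i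
      rw [show (fun j => (hG.eigenvectorBasis i) j) = v from rfl, hv0] at this
      simp [dotProduct] at this
  -- define S := Q * diagonal (sqrt ∘ g) * Qᵀ
  set D : Matrix (Fin K) (Fin K) ℝ := Matrix.diagonal (fun i => Real.sqrt (g i)) with hD
  set S : Matrix (Fin K) (Fin K) ℝ := Q * D * Qᵀ with hS
  have hDD : D * D = Matrix.diagonal g := by
    rw [hD, Matrix.diagonal_mul_diagonal]
    exact congrArg Matrix.diagonal (funext fun i => Real.mul_self_sqrt (hgnn i))
  have hSS : S * S = G := by
    rw [hS]
    calc Q * D * Qᵀ * (Q * D * Qᵀ) = Q * D * (Qᵀ * Q) * D * Qᵀ := by noncomm_ring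
      _ = Q * (D * D) * Qᵀ := by rw [hQorth]; noncomm_ring
      _ = G := by rw [hDD, ← hspec]
  have hSsymm : Sᵀ = S := by
    rw [hS]
    rw [Matrix.transpose_mul, Matrix.transpose_mul, Matrix.transpose_transpose, Matrix.diagonal_transpose]
    noncomm_ring
  have hdetD : D.det ≠ 0 := by
    rw [hD, Matrix.det_diagonal]
    exact Finset.prod_ne_zero_iff.mpr fun i _ => ne_of_gt (Real.sqrt_pos.mpr (hgpos i))
  have hdetQ : IsUnit Q.det := by
    have : Q.det * Qᵀ.det = 1 := by rw [← Matrix.det_mul, hQorth']; simp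
    exact IsUnit.of_mul_eq_one _ this
  have hdetS : IsUnit S.det := by
    rw [hS, Matrix.det_mul, Matrix.det_mul, Matrix.det_transpose]
    refine (hdetQ.mul (Ne.isUnit hdetD)).mul hdetQ
  have hSinv : S⁻¹ * S = 1 := Matrix.nonsing_inv_mul S hdetS
  have hSinv' : S * S⁻¹ = 1 := Matrix.mul_nonsing_inv S hdetS
  have hSinvT : S⁻¹ᵀ = S⁻¹ := by rw [Matrix.transpose_nonsing_inv, hSsymm]
  refine ⟨W * S⁻¹, ?_, ?_⟩
  · rw [Matrix.transpose_mul, hSinvT]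
    calc S⁻¹ * Wᵀ * (W * S⁻¹) = S⁻¹ * (Wᵀ * W) * S⁻¹ := by noncomm_ring
      _ = S⁻¹ * (S * S) * S⁻¹ := by rw [← hGdef, ← hSS]
      _ = (S⁻¹ * S) * (S * S⁻¹) := by noncomm_ring
      _ = 1 := by rw [hSinv, hSinv']; simp
  · have hOW : (W * S⁻¹)ᵀ * W = S := by
      rw [Matrix.transpose_mul, hSinvT]
      calc S⁻¹ * Wᵀ * W = S⁻¹ * (S * S) := by rw [Matrix.mul_assoc, ← hGdef, hSS]
        _ = (S⁻¹ * S) * S := by noncomm_ring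
        _ = S := by rw [hSinv]; simp
    rw [hOW]
    have htrS : S.trace = ∑ i, Real.sqrt (g i) := by
      rw [hS, Matrix.trace_mul_cycle, hQorth, Matrix.one_mul]
      simp [hD, Matrix.trace_diagonal]
    have htrG : G.trace = ∑ i, g i := by
      rw [hspec, Matrix.trace_mul_cycle, hQorth, Matrix.one_mul]
      simp [Matrix.trace_diagonal]
    rw [htrG, htrS]
    apply Finset.sum_le_sum
    intro i _
    nlinarith [Real.sq_sqrt (hgnn i), Real.sqrt_nonneg (g i), hgle i, hgpos i,
      Real.sqrt_le_sqrt (hgle i), Real.sqrt_one]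

lemma nu_lower {n K : ℕ} (lamK ε : ℝ) (hlam : 0 < lamK) (hε : 0 ≤ ε)
    (TA TAh : EuclideanSpace ℝ (Fin n) →ₗ[ℝ] EuclideanSpace ℝ (Fin n))
    (hTAh : TAh.IsSymmetric)
    (u v : Fin K → EuclideanSpace ℝ (Fin n)) (hu : Orthonormal ℝ u) (hv : Orthonormal ℝ v)
    (μ ν : Fin K → ℝ)
    (hTAu : ∀ k, TA (u k) = μ k • u k) (hμ : ∀ k, lamK ≤ |μ k|)
    (hTAhv : ∀ k, TAh (v k) = ν k • v k)
    (hlead : ∀ (c : ℝ) (x : EuclideanSpace ℝ (Fin n)), x ≠ 0 → TAh x = c • x →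
      (∀ k, (inner ℝ x (v k) : ℝ) = 0) → ∀ k, |c| ≤ |ν k|)
    (hE : ∀ x, ‖TA x - TAh x‖ ≤ ε * ‖x‖)
    (j : Fin K) : lamK ≤ |ν j| + ε := by
  classical
  set Shat := Submodule.span ℝ (Set.range v) with hShat
  set Qs := Shatᗮ with hQs
  have hdimV : finrank ℝ (EuclideanSpace ℝ (Fin n)) = n := finrank_euclideanSpace_fin
  have hfinShat : finrank ℝ Shat = K := by
    rw [hShat, finrank_span_eq_card hv.linearIndependent, Fintype.card_fin]
  have hQdim : finrank ℝ Qs + K = n := by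
    rw [hQs]
    have := Submodule.finrank_add_finrank_orthogonal (K := Shat)
    rw [hfinShat, hdimV] at this
    omega
  -- invariance of Qs
  have hysy : ∀ y ∈ Qs, ∀ k, (inner ℝ (v k) y : ℝ) = 0 := by
    intro y hy k
    exact (Submodule.mem_orthogonal Shat y).mp hy (v k) (Submodule.subset_span ⟨k, rfl⟩)
  have hTAhQ : ∀ y ∈ Qs, TAh y ∈ Qs := by
    intro y hy
    rw [hQs, Submodule.mem_orthogonal]
    intro s hs
    induction hs using Submodule.span_induction with
    | mem s hs =>
        obtain ⟨k, rfl⟩ := hs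
        rw [← hTAh (v k) y, hTAhv k, real_inner_smul_left, hysy y hy k, mul_zero]
    | zero => rw [inner_zero_left]
    | add a b _ _ ha hb => rw [inner_add_left, ha, hb, add_zero]
    | smul t a _ ha => rw [real_inner_smul_left, ha, mul_zero]
  -- bound on Qs
  have hQbound : ∀ y ∈ Qs, ‖TAh y‖ ≤ |ν j| * ‖y‖ := by
    intro y hy
    set T' : Qs →ₗ[ℝ] Qs := TAh.restrict hTAhQ with hT'
    have hT'sym : T'.IsSymmetric := by
      intro a b
      have h1 : (T' a : EuclideanSpace ℝ (Fin n)) = TAh a := rfl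
      have h2 : (T' b : EuclideanSpace ℝ (Fin n)) = TAh b := rfl
      rw [Submodule.coe_inner, Submodule.coe_inner, h1, h2]
      exact hTAh _ _
    have heigs : ∀ (c : ℝ) (a : Qs), a ≠ 0 → T' a = c • a → |c| ≤ |ν j| := by
      intro c a ha hca
      have h1 : TAh (a : EuclideanSpace ℝ (Fin n)) = c • (a : EuclideanSpace ℝ (Fin n)) := by
        have := congrArg (Subtype.val) hca
        simpa [hT', LinearMap.restrict_apply] using this
      have h2 : (a : EuclideanSpace ℝ (Fin n)) ≠ 0 := by
        simpa [Submodule.coe_eq_zero] using ha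
      refine hlead c a h2 h1 ?_ j
      intro k
      rw [real_inner_comm]
      exact hysy a a.2 k
    have := symm_op_bound hT'sym (abs_nonneg (ν j)) heigs ⟨y, hy⟩
    simpa [hT', LinearMap.restrict_apply] using this
  -- bound on W' = Qs ⊔ span {v j}
  have hvj0 : v j ≠ 0 := hv.ne_zero j
  have hvjS : v j ∈ Shat := Submodule.subset_span ⟨j, rfl⟩
  set W' := Qs ⊔ (ℝ ∙ v j) with hW'
  have hWbound : ∀ x ∈ W', ‖TAh x‖ ≤ |ν j| * ‖x‖ := by
    intro x hx
    obtain ⟨y, hy, z, hz, rfl⟩ := Submodule.mem_sup.mp hx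
    obtain ⟨t, rfl⟩ := Submodule.mem_span_singleton.mp hz
    have hyv : (inner ℝ y (v j) : ℝ) = 0 := by rw [real_inner_comm]; exact hysy y hy j
    have hTy : TAh y ∈ Qs := hTAhQ y hy
    have hTyv : (inner ℝ (TAh y) (t • (ν j • v j)) : ℝ) = 0 := by
      rw [real_inner_smul_right, real_inner_smul_right, real_inner_comm, hysy _ hTy j]
      ring
    have hyz : (inner ℝ y (t • v j) : ℝ) = 0 := by rw [real_inner_smul_right, hyv, mul_zero]
    have hvnorm : ‖v j‖ = 1 := hv.1 j
    have hxsq : ‖y + t • v j‖^2 = ‖y‖^2 + t^2 := by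
      rw [norm_add_sq_real, hyz, norm_smul, hvnorm, mul_one, Real.norm_eq_abs, sq_abs]
      ring
    have hTA : TAh (y + t • v j) = TAh y + t • (ν j • v j) := by
      rw [map_add, LinearMap.map_smul, hTAhv j]
    have hTsq : ‖TAh (y + t • v j)‖^2 = ‖TAh y‖^2 + t^2 * (ν j)^2 := by
      rw [hTA, norm_add_sq_real, hTyv, norm_smul, norm_smul, hvnorm]
      simp only [Real.norm_eq_abs, mul_one]
      rw [mul_pow, sq_abs, sq_abs]
      ring
    have hQb := hQbound y hy
    have h1 : ‖TAh (y + t • v j)‖^2 ≤ (|ν j|)^2 * ‖y + t • v j‖^2 := by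
      rw [hTsq, hxsq]
      have h2 : ‖TAh y‖^2 ≤ (|ν j|)^2 * ‖y‖^2 := by
        have hln : 0 ≤ |ν j| * ‖y‖ := by positivity
        nlinarith [norm_nonneg (TAh y)]
      have : t^2 * (ν j)^2 = (|ν j|)^2 * t^2 := by rw [sq_abs]; ring
      nlinarith
    calc ‖TAh (y + t • v j)‖ = Real.sqrt (‖TAh (y + t • v j)‖^2) := (Real.sqrt_sq (norm_nonneg _)).symm
      _ ≤ Real.sqrt ((|ν j|)^2 * ‖y + t • v j‖^2) := Real.sqrt_le_sqrt h1
      _ = |ν j| * ‖y + t • v j‖ := by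
          rw [Real.sqrt_mul (sq_nonneg _), Real.sqrt_sq (abs_nonneg _), Real.sqrt_sq (norm_nonneg _)]
  -- dimension count
  set S' := Submodule.span ℝ (Set.range u) with hS'
  have hfinS' : finrank ℝ S' = K := by
    rw [hS', finrank_span_eq_card hu.linearIndependent, Fintype.card_fin]
  have hvjQ : v j ∉ Qs := by
    intro h
    have := (Submodule.mem_orthogonal Shat (v j)).mp h (v j) hvjS
    rw [real_inner_self_eq_norm_sq, hv.1 j] at this
    norm_num at this
  have hinf : Qs ⊓ (ℝ ∙ v j) = ⊥ := by
    rw [Submodule.eq_bot_iff]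
    rintro x ⟨hxQ, hxR⟩
    obtain ⟨t, rfl⟩ := Submodule.mem_span_singleton.mp hxR
    rcases eq_or_ne t 0 with rfl | ht
    · simp
    · exfalso
      exact hvjQ (by simpa [ht] using Submodule.smul_mem Qs t⁻¹ hxQ)
  have hfinW' : finrank ℝ W' = finrank ℝ Qs + 1 := by
    have := Submodule.finrank_sup_add_finrank_inf_eq Qs (ℝ ∙ v j)
    rw [hinf, finrank_span_singleton hvj0] at this
    simpa using this
  have hfinint : 1 ≤ finrank ℝ (S' ⊓ W' : Submodule ℝ (EuclideanSpace ℝ (Fin n))) := by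
    have h1 := Submodule.finrank_sup_add_finrank_inf_eq S' W'
    have h2 : finrank ℝ (S' ⊔ W' : Submodule ℝ (EuclideanSpace ℝ (Fin n))) ≤ n :=
      le_trans (Submodule.finrank_le _) (le_of_eq hdimV)
    rw [hfinS', hfinW'] at h1
    omega
  have hne : (S' ⊓ W' : Submodule ℝ (EuclideanSpace ℝ (Fin n))) ≠ ⊥ := by
    intro h
    rw [h, finrank_bot] at hfinint
    omega
  obtain ⟨x, hx, hx0⟩ := Submodule.exists_mem_ne_zero_of_ne_bot hne
  -- lower bound ‖TA x‖ ≥ lamK ‖x‖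
  obtain ⟨c, rfl⟩ := (Submodule.mem_span_range_iff_exists_fun ℝ).mp hx.1
  set x := ∑ k, c k • u k with hxdef
  have hTAx : TA x = ∑ k, (c k * μ k) • u k := by
    rw [hxdef, map_sum]
    refine Finset.sum_congr rfl fun k _ => ?_
    rw [LinearMap.map_smul, hTAu k, smul_smul]
  have hTAxsq : ‖TA x‖^2 = ∑ k, (c k * μ k)^2 := by
    rw [← real_inner_self_eq_norm_sq, hTAx, on_inner hu]
    exact Finset.sum_congr rfl fun k _ => by ring
  have hxsq : ‖x‖^2 = ∑ k, (c k)^2 := by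
    rw [← real_inner_self_eq_norm_sq, hxdef, on_inner hu]
    exact Finset.sum_congr rfl fun k _ => by ring
  have hlow : lamK * ‖x‖ ≤ ‖TA x‖ := by
    have h1 : (lamK * ‖x‖)^2 ≤ ‖TA x‖^2 := by
      rw [hTAxsq, mul_pow, hxsq, Finset.mul_sum]
      apply Finset.sum_le_sum
      intro k _
      have := hμ k
      have h2 : lamK^2 ≤ (μ k)^2 := by nlinarith [abs_nonneg (μ k), sq_abs (μ k), abs_le.mp (le_refl |μ k|)]
      nlinarith [sq_nonneg (c k)]
    have h3 : 0 ≤ lamK * ‖x‖ := by positivity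
    nlinarith [norm_nonneg (TA x)]
  have hxpos : 0 < ‖x‖ := norm_pos_iff.mpr hx0
  have hfinal : lamK * ‖x‖ ≤ (|ν j| + ε) * ‖x‖ := by
    calc lamK * ‖x‖ ≤ ‖TA x‖ := hlow
      _ ≤ ‖TAh x‖ + ‖TA x - TAh x‖ := by
          have := norm_add_le (TAh x) (TA x - TAh x)
          simpa using this
      _ ≤ |ν j| * ‖x‖ + ε * ‖x‖ := add_le_add (hWbound x hx.2) (hE x)
      _ = (|ν j| + ε) * ‖x‖ := by ring
  exact le_of_mul_le_mul_right hfinal hxpos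


/-- Davis–Kahan-type bound (Theorem 3.1 of Lei–Rinaldo 2015): if the symmetric matrix `A` has
rank `K` with all nonzero eigenvalues of magnitude at least `λ_K`, `U` collects orthonormal
eigenvectors of `A` for these eigenvalues, and `Û` collects `K` leading orthonormal
eigenvectors of the symmetric matrix `Â`, then some orthogonal `O` satisfies
`‖Û - U O‖_F ≤ (2√(2K)/λ_K)‖Â - A‖₂`. -/
theorem stmt12 (n K : ℕ) (hK : 0 < K) (lamK : ℝ) (hlam : 0 < lamK)
    (A Ahat : Matrix (Fin n) (Fin n) ℝ) (hA : A.IsSymm) (hAhat : Ahat.IsSymm)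
    (hrank : A.rank = K)
    (U Uhat : Matrix (Fin n) (Fin K) ℝ) (μ ν : Fin K → ℝ)
    (hUorth : Uᵀ * U = 1) (hUhatorth : Uhatᵀ * Uhat = 1)
    (hUeig : ∀ k, A.mulVec (fun i => U i k) = μ k • (fun i => U i k))
    (hμ : ∀ k, lamK ≤ |μ k|)
    (hUhateig : ∀ k, Ahat.mulVec (fun i => Uhat i k) = ν k • (fun i => Uhat i k))
    (hlead : ∀ (c : ℝ) (x : Fin n → ℝ), x ≠ 0 → Ahat.mulVec x = c • x →
      (∀ k, (∑ i, x i * Uhat i k) = 0) → ∀ k, |c| ≤ |ν k|) :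
    ∃ O : Matrix (Fin K) (Fin K) ℝ, Oᵀ * O = 1 ∧
      Real.sqrt (∑ i, ∑ k, (Uhat i k - (U * O) i k) ^ 2) ≤
        2 * Real.sqrt (2 * K) / lamK * ‖Matrix.toEuclideanCLM (𝕜 := ℝ) (Ahat - A)‖ := by
  classical
  set E := Ahat - A with hEdef
  set ε : ℝ := ‖Matrix.toEuclideanCLM (𝕜 := ℝ) (Ahat - A)‖ with hepsdef
  have hε : 0 ≤ ε := norm_nonneg _
  set u : Fin K → (Fin n → ℝ) := fun k i => U i k with hu
  set v : Fin K → (Fin n → ℝ) := fun k i => Uhat i k with hv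
  set RHS : ℝ := 2 * Real.sqrt (2 * K) / lamK * ε with hRHS
  have hRHSnn : 0 ≤ RHS := by
    rw [hRHS]
    positivity
  -- dot product facts for columns
  have hudot : ∀ k l, u k ⬝ᵥ u l = if k = l then 1 else 0 := by
    intro k l
    have := congrFun (congrFun hUorth k) l
    simpa [Matrix.mul_apply, Matrix.one_apply, Matrix.transpose_apply, dotProduct, hu] using this
  have hvdot : ∀ k l, v k ⬝ᵥ v l = if k = l then 1 else 0 := by
    intro k l
    have := congrFun (congrFun hUhatorth k) l
    simpa [Matrix.mul_apply, Matrix.one_apply, Matrix.transpose_apply, dotProduct, hv] using this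
  -- operator norm bound in dot-product form
  have hnormsq : ∀ y : Fin n → ℝ, ‖(WithLp.equiv 2 (Fin n → ℝ)).symm y‖^2 = y ⬝ᵥ y := by
    intro y
    rw [EuclideanSpace.norm_eq, Real.sq_sqrt (by positivity)]
    simp [dotProduct, Real.norm_eq_abs, sq_abs, sq]
  have hEbound : ∀ x : Fin n → ℝ, (E *ᵥ x) ⬝ᵥ (E *ᵥ x) ≤ ε^2 * (x ⬝ᵥ x) := by
    intro x
    have h1 : toEuclideanCLM (𝕜 := ℝ) E ((WithLp.equiv 2 (Fin n → ℝ)).symm x) =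
        (WithLp.equiv 2 (Fin n → ℝ)).symm (E *ᵥ x) := by
      rw [WithLp.equiv_symm_apply, Matrix.toEuclideanCLM_toLp]
    have h2 := (toEuclideanCLM (𝕜 := ℝ) E).le_opNorm ((WithLp.equiv 2 (Fin n → ℝ)).symm x)
    rw [h1] at h2
    have h3 : ‖(WithLp.equiv 2 (Fin n → ℝ)).symm (E *ᵥ x)‖^2 ≤
        (ε * ‖(WithLp.equiv 2 (Fin n → ℝ)).symm x‖)^2 := by
      rw [hepsdef, hEdef]
      have hn1 : (0:ℝ) ≤ ‖(WithLp.equiv 2 (Fin n → ℝ)).symm (E *ᵥ x)‖ := norm_nonneg _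
      rw [hEdef] at h2
      nlinarith
    calc (E *ᵥ x) ⬝ᵥ (E *ᵥ x) ≤ (ε * ‖(WithLp.equiv 2 (Fin n → ℝ)).symm x‖)^2 := by
          rw [← hnormsq (E *ᵥ x)]; exact h3
      _ = ε^2 * ‖(WithLp.equiv 2 (Fin n → ℝ)).symm x‖^2 := by ring
      _ = ε^2 * (x ⬝ᵥ x) := by rw [hnormsq]
  -- projection facts
  have hμ0 : ∀ k, μ k ≠ 0 := fun k => by
    intro h0; have := hμ k; rw [h0] at this; simp at this; linarith
  have hUtsingle : ∀ k, Uᵀ *ᵥ u k = Pi.single k 1 := by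
    intro k
    funext l
    have := congrFun (congrFun hUorth l) k
    simpa [Matrix.mulVec, dotProduct, Matrix.mul_apply, Matrix.one_apply,
      Pi.single_apply, hu] using this
  have hPu : ∀ k, (U * Uᵀ) *ᵥ u k = u k := by
    intro k
    rw [← Matrix.mulVec_mulVec, hUtsingle k]
    funext i
    simp [Matrix.mulVec_single, hu]
  have hinner : ∀ (a b : Fin n → ℝ), (inner ℝ ((WithLp.equiv 2 (Fin n → ℝ)).symm a)
      ((WithLp.equiv 2 (Fin n → ℝ)).symm b) : ℝ) = a ⬝ᵥ b := by
    intro a b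
    rw [PiLp.inner_apply]
    simp [dotProduct, RCLike.inner_apply, mul_comm]
  set u' : Fin K → EuclideanSpace ℝ (Fin n) := fun k => (WithLp.equiv 2 (Fin n → ℝ)).symm (u k) with hu'
  set v' : Fin K → EuclideanSpace ℝ (Fin n) := fun k => (WithLp.equiv 2 (Fin n → ℝ)).symm (v k) with hv'
  have huorth' : Orthonormal ℝ u' := by
    rw [orthonormal_iff_ite]
    intro k l
    rw [hu', hinner, hudot]
  have hvorth' : Orthonormal ℝ v' := by
    rw [orthonormal_iff_ite]
    intro k l
    rw [hv', hinner, hvdot]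
  have hulin : LinearIndependent ℝ u := by
    have h1 := huorth'.linearIndependent
    have h2 := h1.map' (WithLp.linearEquiv 2 ℝ (Fin n → ℝ)).toLinearMap
      (LinearEquiv.ker (WithLp.linearEquiv 2 ℝ (Fin n → ℝ)))
    exact h2
  have hspanrange : Submodule.span ℝ (Set.range u) = LinearMap.range A.mulVecLin := by
    have hle : Submodule.span ℝ (Set.range u) ≤ LinearMap.range A.mulVecLin := by
      rw [Submodule.span_le]
      rintro _ ⟨k, rfl⟩
      exact ⟨(μ k)⁻¹ • u k, by
        rw [Matrix.mulVecLin_apply, Matrix.mulVec_smul]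
        rw [show A *ᵥ u k = μ k • u k from hUeig k]
        rw [smul_smul, inv_mul_cancel₀ (hμ0 k), one_smul]⟩
    apply Submodule.eq_of_le_of_finrank_le hle
    rw [finrank_span_eq_card hulin, Fintype.card_fin]
    exact le_of_eq hrank
  have hPA : ∀ x : Fin n → ℝ, (U * Uᵀ) *ᵥ (A *ᵥ x) = A *ᵥ x := by
    intro x
    have hmem : A *ᵥ x ∈ Submodule.span ℝ (Set.range u) := by
      rw [hspanrange]
      exact ⟨x, rfl⟩
    obtain ⟨c, hc⟩ := (Submodule.mem_span_range_iff_exists_fun ℝ).mp hmem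
    rw [← hc]
    have hms := _root_.map_sum ((U * Uᵀ).mulVecLin) (fun k => c k • u k) Finset.univ
    rw [show (U * Uᵀ) *ᵥ (∑ k, c k • u k) = (U * Uᵀ).mulVecLin (∑ k, c k • u k) from rfl, hms]
    refine Finset.sum_congr rfl fun k _ => ?_
    rw [LinearMap.map_smul, Matrix.mulVecLin_apply, hPu k]
  have hUtU : ∀ z : Fin n → ℝ, z ⬝ᵥ ((U * Uᵀ) *ᵥ z) = (Uᵀ *ᵥ z) ⬝ᵥ (Uᵀ *ᵥ z) := by
    intro z
    rw [← Matrix.mulVec_mulVec, Matrix.dotProduct_mulVec z U]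
    congr 1
    rw [← Matrix.transpose_transpose U, Matrix.vecMul_transpose, Matrix.transpose_transpose]
  have hUiso : ∀ a : Fin K → ℝ, (U *ᵥ a) ⬝ᵥ (U *ᵥ a) = a ⬝ᵥ a := by
    intro a
    rw [Matrix.dotProduct_mulVec (U *ᵥ a) U a]
    rw [← Matrix.transpose_transpose U, Matrix.vecMul_transpose, Matrix.transpose_transpose]
    rw [Matrix.mulVec_mulVec, hUorth, Matrix.one_mulVec]
  have hUhatiso : ∀ a : Fin K → ℝ, (Uhat *ᵥ a) ⬝ᵥ (Uhat *ᵥ a) = a ⬝ᵥ a := by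
    intro a
    rw [Matrix.dotProduct_mulVec (Uhat *ᵥ a) Uhat a]
    rw [← Matrix.transpose_transpose Uhat, Matrix.vecMul_transpose, Matrix.transpose_transpose]
    rw [Matrix.mulVec_mulVec, hUhatorth, Matrix.one_mulVec]
  have hPexp : ∀ z : Fin n → ℝ,
      (z - (U * Uᵀ) *ᵥ z) ⬝ᵥ (z - (U * Uᵀ) *ᵥ z) = z ⬝ᵥ z - z ⬝ᵥ ((U * Uᵀ) *ᵥ z) := by
    intro z
    have hPzPz : ((U * Uᵀ) *ᵥ z) ⬝ᵥ ((U * Uᵀ) *ᵥ z) = z ⬝ᵥ ((U * Uᵀ) *ᵥ z) := by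
      rw [show (U * Uᵀ) *ᵥ z = U *ᵥ (Uᵀ *ᵥ z) from (Matrix.mulVec_mulVec ..).symm, hUiso (Uᵀ *ᵥ z), ← hUtU z,
        show (U * Uᵀ) *ᵥ z = U *ᵥ (Uᵀ *ᵥ z) from (Matrix.mulVec_mulVec ..).symm]
    have hcomm : ((U * Uᵀ) *ᵥ z) ⬝ᵥ z = z ⬝ᵥ ((U * Uᵀ) *ᵥ z) := dotProduct_comm _ _
    rw [sub_dotProduct, dotProduct_sub, dotProduct_sub, hPzPz, hcomm]
    ring
  have hPle : ∀ z : Fin n → ℝ, z ⬝ᵥ ((U * Uᵀ) *ᵥ z) ≤ z ⬝ᵥ z := by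
    intro z
    have h1 := hPexp z
    have h2 := dot_self_nonneg (z - (U * Uᵀ) *ᵥ z)
    linarith
  -- the residuals
  set w : Fin K → (Fin n → ℝ) := fun k => v k - (U * Uᵀ) *ᵥ v k with hw
  have hAE : Ahat = A + E := by rw [hEdef]; abel
  have hkey : ∀ k, ν k • w k = (E *ᵥ v k) - (U * Uᵀ) *ᵥ (E *ᵥ v k) := by
    intro k
    have hveig : Ahat *ᵥ v k = ν k • v k := hUhateig k
    calc ν k • w k = ν k • v k - (U * Uᵀ) *ᵥ (ν k • v k) := by
          rw [hw, smul_sub, Matrix.mulVec_smul]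
      _ = Ahat *ᵥ v k - (U * Uᵀ) *ᵥ (Ahat *ᵥ v k) := by rw [hveig]
      _ = (A *ᵥ v k + E *ᵥ v k) - ((U * Uᵀ) *ᵥ (A *ᵥ v k) + (U * Uᵀ) *ᵥ (E *ᵥ v k)) := by
          rw [hAE, Matrix.add_mulVec, Matrix.mulVec_add]
      _ = (E *ᵥ v k) - (U * Uᵀ) *ᵥ (E *ᵥ v k) := by
          rw [hPA (v k)]
          funext i
          simp only [Pi.add_apply, Pi.sub_apply]
          ring
  have hwbound : ∀ k, (ν k)^2 * (w k ⬝ᵥ w k) ≤ ε^2 := by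
    intro k
    have h1 : (ν k • w k) ⬝ᵥ (ν k • w k) = (ν k)^2 * (w k ⬝ᵥ w k) := by
      rw [smul_dotProduct, dotProduct_smul, smul_eq_mul, smul_eq_mul, sq]
      ring
    have h2 : (ν k • w k) ⬝ᵥ (ν k • w k) ≤ ε^2 := by
      rw [hkey k, hPexp (E *ᵥ v k)]
      have h3 : 0 ≤ (E *ᵥ v k) ⬝ᵥ ((U * Uᵀ) *ᵥ (E *ᵥ v k)) := by
        rw [hUtU]; exact dot_self_nonneg _
      have h4 := hEbound (v k)
      have h5 : v k ⬝ᵥ v k = 1 := by rw [hvdot k k]; simp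
      rw [h5] at h4
      linarith
    linarith [h1 ▸ h2]
  -- Frobenius expansion
  have hfrob : ∀ (M : Matrix (Fin n) (Fin K) ℝ), ∑ i, ∑ k, (M i k)^2 = (Mᵀ * M).trace := by
    intro M
    rw [Matrix.trace, Finset.sum_comm]
    refine Finset.sum_congr rfl fun k _ => ?_
    simp [Matrix.diag, Matrix.mul_apply, sq]
  have hexp : ∀ O : Matrix (Fin K) (Fin K) ℝ, Oᵀ * O = 1 →
      ∑ i, ∑ k, (Uhat i k - (U * O) i k)^2 = 2*(K:ℝ) - 2*((Oᵀ * (Uᵀ * Uhat)).trace) := by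
    intro O hO
    have h0 : ∀ i k, Uhat i k - (U * O) i k = (Uhat - U * O) i k := by intro i k; simp [Matrix.sub_apply]
    simp_rw [h0]
    rw [hfrob (Uhat - U * O)]
    have h2 : Oᵀ * Uᵀ * (U * O) = 1 := by
      calc Oᵀ * Uᵀ * (U * O) = Oᵀ * (Uᵀ * U) * O := by
            rw [Matrix.mul_assoc Oᵀ Uᵀ (U * O), ← Matrix.mul_assoc Uᵀ U O, ← Matrix.mul_assoc]
        _ = Oᵀ * O := by rw [hUorth, Matrix.mul_one]
        _ = 1 := hO
    have h3 : (Oᵀ * (Uᵀ * Uhat))ᵀ = Uhatᵀ * (U * O) := by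
      rw [Matrix.transpose_mul, Matrix.transpose_mul, Matrix.transpose_transpose,
        Matrix.transpose_transpose, Matrix.mul_assoc]
    have h4 : Oᵀ * Uᵀ * Uhat = Oᵀ * (Uᵀ * Uhat) := Matrix.mul_assoc _ _ _
    have h1 : (Uhat - U * O)ᵀ * (Uhat - U * O) =
        1 - (Oᵀ * (Uᵀ * Uhat))ᵀ - Oᵀ * (Uᵀ * Uhat) + 1 := by
      conv_lhs => rw [Matrix.transpose_sub, Matrix.transpose_mul]
      rw [Matrix.sub_mul, Matrix.mul_sub, Matrix.mul_sub, hUhatorth, h2, ← h3, h4]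
      abel
    rw [h1]
    rw [Matrix.trace_add, Matrix.trace_sub, Matrix.trace_sub, Matrix.trace_transpose,
      Matrix.trace_one]
    simp
    ring
  set W : Matrix (Fin K) (Fin K) ℝ := Uᵀ * Uhat with hWdef
  have hRHSsq : RHS^2 = 8*(K:ℝ)*ε^2/lamK^2 := by
    rw [hRHS, mul_pow, div_pow, mul_pow, Real.sq_sqrt (by positivity)]
    ring
  have hconc : ∀ O : Matrix (Fin K) (Fin K) ℝ,
      (∑ i, ∑ k, (Uhat i k - (U * O) i k)^2) ≤ RHS^2 →
      Real.sqrt (∑ i, ∑ k, (Uhat i k - (U * O) i k) ^ 2) ≤ RHS := by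
    intro O hle
    have := Real.sqrt_le_sqrt hle
    rwa [Real.sqrt_sq hRHSnn] at this
  by_cases hc : lamK ≤ 2*ε
  · -- trivial case
    have hKRHS : 2*(K:ℝ) ≤ RHS^2 := by
      rw [hRHSsq, le_div_iff₀ (by positivity)]
      have hK1 : (0:ℝ) ≤ (K:ℝ) := Nat.cast_nonneg K
      have h5 : lamK^2 ≤ 4*ε^2 := by nlinarith
      nlinarith [mul_le_mul_of_nonneg_left h5 hK1]
    by_cases htr : 0 ≤ W.trace
    · refine ⟨1, by simp, ?_⟩
      apply hconc 1
      rw [hexp 1 (by simp)]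
      have h2 : ((1:Matrix (Fin K) (Fin K) ℝ)ᵀ * W).trace = W.trace := by
        rw [Matrix.transpose_one, Matrix.one_mul]
      rw [h2]
      linarith
    · push_neg at htr
      refine ⟨-1, by simp, ?_⟩
      apply hconc (-1)
      rw [hexp (-1) (by simp)]
      have h2 : ((-1:Matrix (Fin K) (Fin K) ℝ)ᵀ * W).trace = -W.trace := by
        rw [Matrix.transpose_neg, Matrix.transpose_one, Matrix.neg_mul, Matrix.one_mul,
          Matrix.trace_neg]
      rw [h2]
      linarith
  · -- main case
    push_neg at hc
    -- eigenvalue lower bound via nu_lower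
    have hAhatherm : Ahat.IsHermitian := by
      rw [Matrix.IsHermitian, Matrix.conjTranspose_eq_transpose_of_trivial]
      exact hAhat
    have hTAhsym : (Matrix.toEuclideanLin Ahat).IsSymmetric :=
      (Matrix.isHermitian_iff_isSymmetric).mp hAhatherm
    have hTAu' : ∀ k, Matrix.toEuclideanLin A (u' k) = μ k • u' k := by
      intro k
      rw [hu']
      rw [WithLp.equiv_symm_apply, Matrix.toEuclideanLin_apply_piLp_toLp]
      rw [show A *ᵥ u k = μ k • u k from hUeig k]
      rfl
    have hTAhv' : ∀ k, Matrix.toEuclideanLin Ahat (v' k) = ν k • v' k := by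
      intro k
      rw [hv']
      rw [WithLp.equiv_symm_apply, Matrix.toEuclideanLin_apply_piLp_toLp]
      rw [show Ahat *ᵥ v k = ν k • v k from hUhateig k]
      rfl
    have hlead' : ∀ (c : ℝ) (x : EuclideanSpace ℝ (Fin n)), x ≠ 0 →
        Matrix.toEuclideanLin Ahat x = c • x →
        (∀ k, (inner ℝ x (v' k) : ℝ) = 0) → ∀ k, |c| ≤ |ν k| := by
      intro c x hx0 hx hperp k
      set x₀ : Fin n → ℝ := WithLp.equiv 2 (Fin n → ℝ) x with hx₀
      have hx₀0 : x₀ ≠ 0 := by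
        intro h
        apply hx0
        have : (WithLp.equiv 2 (Fin n → ℝ)).symm x₀ = (WithLp.equiv 2 (Fin n → ℝ)).symm 0 := by
          rw [h]
        simpa [hx₀] using this
      have hmv : Ahat *ᵥ x₀ = c • x₀ := by
        have h1 : Matrix.toEuclideanLin Ahat x = (WithLp.equiv 2 (Fin n → ℝ)).symm (Ahat *ᵥ x₀) := by
          rw [Matrix.toEuclideanLin_apply]; rfl
        rw [h1] at hx
        have := congrArg (WithLp.equiv 2 (Fin n → ℝ)) hx
        simpa [hx₀] using this
      have hsum : ∀ l, (∑ i, x₀ i * Uhat i l) = 0 := by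
        intro l
        have h2 : (inner ℝ ((WithLp.equiv 2 (Fin n → ℝ)).symm x₀)
            ((WithLp.equiv 2 (Fin n → ℝ)).symm (v l)) : ℝ) = x₀ ⬝ᵥ v l := hinner x₀ (v l)
        have h3 : (WithLp.equiv 2 (Fin n → ℝ)).symm x₀ = x := by simp [hx₀]
        have h4 : (WithLp.equiv 2 (Fin n → ℝ)).symm (v l) = v' l := rfl
        rw [h3, h4] at h2
        rw [show (∑ i, x₀ i * Uhat i l) = x₀ ⬝ᵥ v l from rfl, ← h2]
        exact hperp l
      exact hlead c x₀ hx₀0 hmv hsum k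
    have hE' : ∀ x : EuclideanSpace ℝ (Fin n),
        ‖Matrix.toEuclideanLin A x - Matrix.toEuclideanLin Ahat x‖ ≤ ε * ‖x‖ := by
      intro x
      have h1 : Matrix.toEuclideanLin A x - Matrix.toEuclideanLin Ahat x
          = -(Matrix.toEuclideanLin (Ahat - A) x) := by
        rw [map_sub]
        simp
      rw [h1, norm_neg]
      have h2 : Matrix.toEuclideanLin (Ahat - A) x = Matrix.toEuclideanCLM (𝕜 := ℝ) (Ahat - A) x := by
        rw [← Matrix.coe_toEuclideanCLM_eq_toEuclideanLin]
        rfl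
      rw [h2, hepsdef]
      exact (Matrix.toEuclideanCLM (𝕜 := ℝ) (Ahat - A)).le_opNorm x
    have hν : ∀ j, lamK ≤ |ν j| + ε := fun j =>
      nu_lower lamK ε hlam hε (Matrix.toEuclideanLin A) (Matrix.toEuclideanLin Ahat)
        hTAhsym u' v' huorth' hvorth' μ ν hTAu' hμ hTAhv' hlead' hE' j
    have hνlow : ∀ k, lamK - ε ≤ |ν k| := fun k => by linarith [hν k]
    -- residual bound
    have hw4 : ∀ k, w k ⬝ᵥ w k ≤ 4*ε^2/lamK^2 := by
      intro k
      have h1 := hwbound k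
      have h2 : (lamK - ε)^2 ≤ (ν k)^2 := by
        nlinarith [hνlow k, abs_nonneg (ν k), sq_abs (ν k)]
      have h3 : (lamK - ε)^2 * (w k ⬝ᵥ w k) ≤ ε^2 := by
        nlinarith [dot_self_nonneg (w k)]
      have h4 : lamK/2 ≤ lamK - ε := by linarith
      rw [le_div_iff₀ (by positivity)]
      have h5 : (lamK/2)^2 ≤ (lamK-ε)^2 := by nlinarith
      have h6 : (lamK/2)^2 * (w k ⬝ᵥ w k) ≤ (lamK-ε)^2 * (w k ⬝ᵥ w k) :=
        mul_le_mul_of_nonneg_right h5 (dot_self_nonneg _)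
      nlinarith [dot_self_nonneg (w k)]
    -- contraction and injectivity of W
    have hWcol : ∀ x : Fin K → ℝ, W *ᵥ x = Uᵀ *ᵥ (Uhat *ᵥ x) := fun x =>
      (Matrix.mulVec_mulVec ..).symm
    have hUtle : ∀ z : Fin n → ℝ, (Uᵀ *ᵥ z) ⬝ᵥ (Uᵀ *ᵥ z) ≤ z ⬝ᵥ z := fun z => by
      rw [← hUtU]; exact hPle z
    have hcontrW : ∀ x : Fin K → ℝ, (W *ᵥ x) ⬝ᵥ (W *ᵥ x) ≤ x ⬝ᵥ x := by
      intro x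
      rw [hWcol]
      calc (Uᵀ *ᵥ (Uhat *ᵥ x)) ⬝ᵥ (Uᵀ *ᵥ (Uhat *ᵥ x)) ≤ (Uhat *ᵥ x) ⬝ᵥ (Uhat *ᵥ x) := hUtle _
        _ = x ⬝ᵥ x := hUhatiso x
    have hAUcol : A * U = U * Matrix.diagonal μ := by
      ext i k
      have h1 : (A * U) i k = (A *ᵥ u k) i := by
        simp [Matrix.mul_apply, Matrix.mulVec, dotProduct, hu]
      rw [h1, show A *ᵥ u k = μ k • u k from hUeig k, Matrix.mul_diagonal]
      simp [hu]
      ring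
    have hAhatUcol : Ahat * Uhat = Uhat * Matrix.diagonal ν := by
      ext i k
      have h1 : (Ahat * Uhat) i k = (Ahat *ᵥ v k) i := by
        simp [Matrix.mul_apply, Matrix.mulVec, dotProduct, hv]
      rw [h1, show Ahat *ᵥ v k = ν k • v k from hUhateig k, Matrix.mul_diagonal]
      simp [hv]
      ring
    have hinjW : ∀ x : Fin K → ℝ, W *ᵥ x = 0 → x = 0 := by
      intro x hWx
      by_contra hx0
      set z : Fin n → ℝ := Uhat *ᵥ x with hz
      have hUz : Uᵀ *ᵥ z = 0 := by rw [hz, ← hWcol]; exact hWx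
      have hUtA : Uᵀ * A = Matrix.diagonal μ * Uᵀ := by
        have h1 : Uᵀ * A = Uᵀ * Aᵀ := by rw [hA.eq]
        rw [h1, ← Matrix.transpose_mul, hAUcol, Matrix.transpose_mul, Matrix.diagonal_transpose]
      have hAz : A *ᵥ z = 0 := by
        apply dot_self_eq_zero'
        have h1 : (A *ᵥ z) ⬝ᵥ (A *ᵥ z) = (Uᵀ *ᵥ (A *ᵥ z)) ⬝ᵥ (Uᵀ *ᵥ (A *ᵥ z)) := by
          calc (A *ᵥ z) ⬝ᵥ (A *ᵥ z) = (A *ᵥ z) ⬝ᵥ ((U * Uᵀ) *ᵥ (A *ᵥ z)) := by rw [hPA z]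
            _ = (Uᵀ *ᵥ (A *ᵥ z)) ⬝ᵥ (Uᵀ *ᵥ (A *ᵥ z)) := hUtU _
        have h2 : Uᵀ *ᵥ (A *ᵥ z) = 0 := by
          rw [Matrix.mulVec_mulVec, hUtA, ← Matrix.mulVec_mulVec, hUz, Matrix.mulVec_zero]
        rw [h2] at h1
        simpa using h1
      have hzx : z ⬝ᵥ z = x ⬝ᵥ x := hUhatiso x
      have hAhatz : Ahat *ᵥ z = E *ᵥ z := by
        rw [hAE, Matrix.add_mulVec, hAz, zero_add]
      have hup : (Ahat *ᵥ z) ⬝ᵥ (Ahat *ᵥ z) ≤ ε^2 * (x ⬝ᵥ x) := by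
        rw [hAhatz, ← hzx]
        exact hEbound z
      have hlow2 : (lamK - ε)^2 * (x ⬝ᵥ x) ≤ (Ahat *ᵥ z) ⬝ᵥ (Ahat *ᵥ z) := by
        have h1 : Ahat *ᵥ z = Uhat *ᵥ (Matrix.diagonal ν *ᵥ x) := by
          rw [hz, Matrix.mulVec_mulVec, hAhatUcol, ← Matrix.mulVec_mulVec]
        rw [h1, hUhatiso]
        have h2 : (Matrix.diagonal ν *ᵥ x) ⬝ᵥ (Matrix.diagonal ν *ᵥ x) = ∑ k, (ν k)^2 * (x k)^2 := by
          simp [dotProduct, Matrix.mulVec_diagonal, sq]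
          exact Finset.sum_congr rfl fun k _ => by ring
        rw [h2, show x ⬝ᵥ x = ∑ k, (x k)^2 from by simp [dotProduct, sq], Finset.mul_sum]
        apply Finset.sum_le_sum
        intro k _
        have h3 : (lamK - ε)^2 ≤ (ν k)^2 := by
          nlinarith [hνlow k, abs_nonneg (ν k), sq_abs (ν k)]
        nlinarith [sq_nonneg (x k)]
      have hxx : 0 < x ⬝ᵥ x := dot_self_pos hx0
      have h9 : (lamK-ε)^2 * (x ⬝ᵥ x) ≤ ε^2 * (x ⬝ᵥ x) := le_trans hlow2 hup
      have h10 : (lamK-ε)^2 ≤ ε^2 := by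
        by_contra hcon
        push_neg at hcon
        nlinarith [mul_lt_mul_of_pos_right hcon hxx]
      nlinarith [h10]
    obtain ⟨O, hOorth, htr⟩ := polar W hcontrW hinjW
    refine ⟨O, hOorth, ?_⟩
    -- trace identity
    have hwk : ∀ k, w k ⬝ᵥ w k = 1 - (Uᵀ *ᵥ v k) ⬝ᵥ (Uᵀ *ᵥ v k) := by
      intro k
      have h1 : w k ⬝ᵥ w k = v k ⬝ᵥ v k - v k ⬝ᵥ ((U * Uᵀ) *ᵥ v k) := hPexp (v k)
      rw [h1, hUtU, show v k ⬝ᵥ v k = 1 from by simp [hvdot k k]]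
    have hdiag : ∀ k, (Wᵀ * W) k k = (Uᵀ *ᵥ v k) ⬝ᵥ (Uᵀ *ᵥ v k) := by
      intro k
      simp only [Matrix.mul_apply, Matrix.transpose_apply, dotProduct, Matrix.mulVec,
        hWdef, hv]
    have hWtW : (Wᵀ * W).trace = (K:ℝ) - ∑ k, (w k ⬝ᵥ w k) := by
      rw [Matrix.trace]
      have h1 : ∀ k, (Wᵀ * W).diag k = 1 - (w k ⬝ᵥ w k) := by
        intro k
        rw [Matrix.diag, hdiag k, hwk k]
        ring
      rw [Finset.sum_congr rfl fun k _ => h1 k]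
      rw [Finset.sum_sub_distrib]
      simp
    have hsum : ∑ k, (w k ⬝ᵥ w k) ≤ (K:ℝ) * (4*ε^2/lamK^2) := by
      calc ∑ k, (w k ⬝ᵥ w k) ≤ ∑ _k : Fin K, (4*ε^2/lamK^2) := Finset.sum_le_sum fun k _ => hw4 k
        _ = (K:ℝ) * (4*ε^2/lamK^2) := by simp [Finset.sum_const, mul_comm]
    apply hconc O
    rw [hexp O hOorth]
    have htrlow : (K:ℝ) - (K:ℝ)*(4*ε^2/lamK^2) ≤ (Oᵀ * W).trace := by
      calc (K:ℝ) - (K:ℝ)*(4*ε^2/lamK^2) ≤ (K:ℝ) - ∑ k, (w k ⬝ᵥ w k) := by linarith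
        _ = (Wᵀ * W).trace := hWtW.symm
        _ ≤ (Oᵀ * W).trace := htr
    rw [hRHSsq]
    have hid : 2*((K:ℝ)*(4*ε^2/lamK^2)) = 8*(K:ℝ)*ε^2/lamK^2 := by
      field_simp
      ring
    linarith [htrlow]
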